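/- Let z ∈ ℂ with |Re(z)| ≥ 1/2 and let y ∈ ℝ. Then (y² + 1) / |z² + y²|² ≤ 16. -/

import Mathlib

lemma stmt_1_aux (s t v : ℝ) (hs : 1/4 ≤ s) (ht : 0 ≤ t) (hv : 0 ≤ v) :
    t + 1 ≤ 16*(v+s-t)^2 + 64*s*t := by
  nlinarith [mul_nonneg ht (by linarith : (0:ℝ) ≤ 4*s-1),
    mul_nonneg hv (by linarith : (0:ℝ) ≤ 4*s-1),
    mul_nonneg hv ht, sq_nonneg (v+s-t), sq_nonneg (v+s-t-1/4), sq_nonneg (s-t),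
    mul_nonneg hv hv, sq_nonneg t]

theorem stmt_1 (z : ℂ) (y : ℝ) (hz : 1 / 2 ≤ |z.re|) :
    (y ^ 2 + 1) / ‖z ^ 2 + (y : ℂ) ^ 2‖ ^ 2 ≤ 16 := by
  set a := z.re with ha
  set b := z.im with hb
  have ha2 : (1:ℝ)/4 ≤ a ^ 2 := by
    have := abs_nonneg a
    nlinarith [sq_abs a]
  have h1 : ‖z ^ 2 + (y : ℂ) ^ 2‖ ^ 2
      = (a ^ 2 - b ^ 2 + y ^ 2) ^ 2 + (2 * a * b) ^ 2 := by
    rw [Complex.sq_norm, Complex.normSq_apply]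
    simp [Complex.add_re, Complex.add_im, Complex.mul_re, Complex.mul_im, pow_two]
    ring
  have H := stmt_1_aux (a ^ 2) (y ^ 2) (b ^ 2) ha2 (sq_nonneg y) (sq_nonneg b)
  have h2 : y ^ 2 + 1 ≤ 16 * ((a ^ 2 - b ^ 2 + y ^ 2) ^ 2 + (2 * a * b) ^ 2) := by
    nlinarith [H]
  have hpos : 0 < (a ^ 2 - b ^ 2 + y ^ 2) ^ 2 + (2 * a * b) ^ 2 := by
    nlinarith [sq_nonneg y]
  rw [h1, div_le_iff₀ hpos]
  nlinarith
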